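/- Suppose (B*, u) minimizes f_V over all pairs (B, v) where B is a generalized Mahalanobis operator on V and v ∈ V, and let A* be a generalized Mahalanobis operator on H satisfying ⟨A* x, y⟩ = ⟨B* x, y⟩ for all x, y ∈ V. Then (A*, u) minimizes f over all pairs (A, w) where A is a generalized Mahalanobis operator on H and w ∈ H. -/

import Mathlib

open scoped RealInnerProductSpace

/-- A continuous linear operator on a real inner product space is a *generalized Mahalanobis
operator* if it is self-adjoint and positive definite. -/
def IsGenMahalanobis {H : Type*} [NormedAddCommGroup H] [InnerProductSpace ℝ H]
    (A : H →L[ℝ] H) : Prop :=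
  (∀ x y : H, ⟪A x, y⟫ = ⟪x, A y⟫) ∧ ∀ x : H, x ≠ 0 → 0 < ⟪A x, x⟫

/-- A linear operator on a (subspace viewed as an) inner product space is a *generalized
Mahalanobis operator* if it is self-adjoint and positive definite. -/
def IsGenMahalanobisLin {V : Type*} [NormedAddCommGroup V] [InnerProductSpace ℝ V]
    (B : V →ₗ[ℝ] V) : Prop :=
  (∀ x y : V, ⟪B x, y⟫ = ⟪x, B y⟫) ∧ ∀ x : V, x ≠ 0 → 0 < ⟪B x, x⟫

/-- The paired-comparison empirical objective
`f(A, u) = Σ_i ℓ (sgn (‖z^i_1 - u‖_A² - ‖z^i_2 - u‖_A²)) (y i)`,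
where `‖x‖_A² = ⟪A x, x⟫`. -/
noncomputable def pairObj {H : Type*} [NormedAddCommGroup H] [InnerProductSpace ℝ H]
    {n : ℕ} (ℓ : ℝ → ℝ → ℝ) (z₁ z₂ : Fin n → H) (y : Fin n → ℝ)
    (A : H → H) (u : H) : ℝ :=
  ∑ i, ℓ (Real.sign (⟪A (z₁ i - u), z₁ i - u⟫ - ⟪A (z₂ i - u), z₂ i - u⟫)) (y i)

/-- Algebraic key: differences of `A`-quadratic distances only depend on the base point
through `⟪A (z₁ - z₂), ·⟫`. -/
lemma key_diff {H : Type*} [NormedAddCommGroup H] [InnerProductSpace ℝ H]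
    (A : H →L[ℝ] H) (hsa : ∀ x y : H, ⟪A x, y⟫ = ⟪x, A y⟫)
    (z₁ z₂ w v : H) (hv : ⟪A (z₁ - z₂), v⟫ = ⟪A (z₁ - z₂), w⟫) :
    ⟪A (z₁ - v), z₁ - v⟫ - ⟪A (z₂ - v), z₂ - v⟫ =
      ⟪A (z₁ - w), z₁ - w⟫ - ⟪A (z₂ - w), z₂ - w⟫ := by
  have hsym : ∀ x u : H, ⟪A u, x⟫ = ⟪A x, u⟫ := by
    intro x u
    rw [hsa, real_inner_comm]
  have expand : ∀ x u : H, ⟪A (x - u), x - u⟫ = ⟪A x, x⟫ - 2 * ⟪A x, u⟫ + ⟪A u, u⟫ := by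
    intro x u
    simp only [map_sub, inner_sub_left, inner_sub_right]
    rw [hsym x u]
    ring
  have hv' : ⟪A z₁, v⟫ - ⟪A z₂, v⟫ = ⟪A z₁, w⟫ - ⟪A z₂, w⟫ := by
    simpa [map_sub, inner_sub_left] using hv
  rw [expand z₁ v, expand z₂ v, expand z₁ w, expand z₂ w]
  linarith

/-- If `(B*, u)` minimizes the finite-dimensional paired-comparison objective
`f_V` over generalized Mahalanobis operators on `V` and points of `V`, and `A*` is a
generalized Mahalanobis operator on `H` agreeing with `B*` on `V`, then `(A*, u)` minimizes
the infinite-dimensional objective `f`. -/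
theorem subspace_minimizer_extends_to_minimizer
    {H : Type*} [NormedAddCommGroup H] [InnerProductSpace ℝ H] [CompleteSpace H]
    (V : Submodule ℝ H) [FiniteDimensional ℝ V]
    {n : ℕ} (ℓ : ℝ → ℝ → ℝ) (z₁ z₂ : Fin n → H) (y : Fin n → ℝ)
    (hz₁ : ∀ i, z₁ i ∈ V) (hz₂ : ∀ i, z₂ i ∈ V)
    (hy : ∀ i, y i = 1 ∨ y i = -1)
    (Bstar : V →ₗ[ℝ] V) (hBstar : IsGenMahalanobisLin Bstar) (u : V)
    (hmin : ∀ (B : V →ₗ[ℝ] V), IsGenMahalanobisLin B → ∀ v : V,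
      pairObj ℓ (fun i => (⟨z₁ i, hz₁ i⟩ : V)) (fun i => (⟨z₂ i, hz₂ i⟩ : V)) y ⇑Bstar u ≤
        pairObj ℓ (fun i => (⟨z₁ i, hz₁ i⟩ : V)) (fun i => (⟨z₂ i, hz₂ i⟩ : V)) y ⇑B v)
    (Astar : H →L[ℝ] H) (hAstar : IsGenMahalanobis Astar)
    (hagree : ∀ x y' : V, ⟪Astar (x : H), (y' : H)⟫ = ⟪Bstar x, y'⟫) :
    ∀ (A : H →L[ℝ] H), IsGenMahalanobis A → ∀ w : H,
      pairObj ℓ z₁ z₂ y ⇑Astar (u : H) ≤ pairObj ℓ z₁ z₂ y ⇑A w := by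
  intro A hA w
  -- Step 1: f(A*, u) = f_V(B*, u)
  have hstar : pairObj ℓ z₁ z₂ y ⇑Astar (u : H) =
      pairObj ℓ (fun i => (⟨z₁ i, hz₁ i⟩ : V)) (fun i => (⟨z₂ i, hz₂ i⟩ : V)) y ⇑Bstar u := by
    unfold pairObj
    refine Finset.sum_congr rfl fun i _ => ?_
    congr 2
    · have h1 : ⟪Astar (z₁ i - (u : H)), z₁ i - (u : H)⟫ =
          ⟪Bstar ((⟨z₁ i, hz₁ i⟩ : V) - u), (⟨z₁ i, hz₁ i⟩ : V) - u⟫ := by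
        have := hagree ((⟨z₁ i, hz₁ i⟩ : V) - u) ((⟨z₁ i, hz₁ i⟩ : V) - u)
        simpa using this
      have h2 : ⟪Astar (z₂ i - (u : H)), z₂ i - (u : H)⟫ =
          ⟪Bstar ((⟨z₂ i, hz₂ i⟩ : V) - u), (⟨z₂ i, hz₂ i⟩ : V) - u⟫ := by
        have := hagree ((⟨z₂ i, hz₂ i⟩ : V) - u) ((⟨z₂ i, hz₂ i⟩ : V) - u)
        simpa using this
      rw [h1, h2]
  -- Step 2: construct B on V from A
  set B : V →ₗ[ℝ] V :=
    V.orthogonalProjectionOnto.toLinearMap ∘ₗ (A.toLinearMap ∘ₗ V.subtype) with hBdef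
  have hBinner : ∀ a b : V, ⟪B a, b⟫ = ⟪A (a : H), (b : H)⟫ := by
    intro a b
    have hz : ⟪A (a : H) - (V.orthogonalProjectionOnto (A (a : H)) : H), (b : H)⟫ = 0 :=
      Submodule.starProjection_inner_eq_zero (K := V) (A (a : H)) (b : H) b.2
    have : ⟪B a, b⟫ = ⟪((V.orthogonalProjectionOnto (A (a : H))) : H), (b : H)⟫ := rfl
    rw [this]
    rw [inner_sub_left] at hz
    linarith
  have hBm : IsGenMahalanobisLin B := by
    constructor
    · intro x y'
      calc ⟪B x, y'⟫ = ⟪A (x : H), (y' : H)⟫ := hBinner x y'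
        _ = ⟪(x : H), A (y' : H)⟫ := hA.1 _ _
        _ = ⟪A (y' : H), (x : H)⟫ := real_inner_comm _ _
        _ = ⟪B y', x⟫ := (hBinner y' x).symm
        _ = ⟪x, B y'⟫ := real_inner_comm _ _
    · intro x hx
      rw [hBinner]
      exact hA.2 (x : H) (by simpa using hx)
  -- Step 3: find v ∈ V with B v = proj (A w)
  have hBinj : Function.Injective B := by
    rw [← LinearMap.ker_eq_bot, Submodule.eq_bot_iff]
    intro x hx
    by_contra hxne
    have := hBm.2 x hxne
    rw [LinearMap.mem_ker] at hx
    rw [hx] at this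
    simp at this
  obtain ⟨v, hv⟩ := (LinearMap.injective_iff_surjective.mp hBinj)
    (V.orthogonalProjectionOnto (A w))
  -- v agrees with w against A on V
  have hvw : ∀ d : V, ⟪A (d : H), (v : H)⟫ = ⟪A (d : H), w⟫ := by
    intro d
    have h1 : ⟪A (d : H), (v : H)⟫ = ⟪B d, v⟫ := (hBinner d v).symm
    have h2 : ⟪B d, v⟫ = ⟪d, B v⟫ := hBm.1 d v
    have h3 : ⟪d, B v⟫ = ⟪(d : H), A w⟫ := by
      rw [hv]
      have hz : ⟪A w - (V.orthogonalProjectionOnto (A w) : H), (d : H)⟫ = 0 :=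
        Submodule.starProjection_inner_eq_zero (K := V) (A w) (d : H) d.2
      rw [inner_sub_left] at hz
      have : ⟪(d : V), (V.orthogonalProjectionOnto (A w))⟫ =
          ⟪(d : H), ((V.orthogonalProjectionOnto (A w)) : H)⟫ := rfl
      rw [this]
      rw [real_inner_comm] at hz ⊢
      linarith
    rw [h1, h2, h3, hA.1]
  -- Step 4: f_V(B, v) = f(A, w)
  have hval : pairObj ℓ (fun i => (⟨z₁ i, hz₁ i⟩ : V)) (fun i => (⟨z₂ i, hz₂ i⟩ : V)) y ⇑B v =
      pairObj ℓ z₁ z₂ y ⇑A w := by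
    unfold pairObj
    refine Finset.sum_congr rfl fun i _ => ?_
    congr 2
    have e1 : ⟪B ((⟨z₁ i, hz₁ i⟩ : V) - v), (⟨z₁ i, hz₁ i⟩ : V) - v⟫ =
        ⟪A (z₁ i - (v : H)), z₁ i - (v : H)⟫ := by
      rw [hBinner]; rfl
    have e2 : ⟪B ((⟨z₂ i, hz₂ i⟩ : V) - v), (⟨z₂ i, hz₂ i⟩ : V) - v⟫ =
        ⟪A (z₂ i - (v : H)), z₂ i - (v : H)⟫ := by
      rw [hBinner]; rfl
    rw [e1, e2]
    refine key_diff A hA.1 (z₁ i) (z₂ i) w (v : H) ?_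
    have := hvw ((⟨z₁ i, hz₁ i⟩ : V) - (⟨z₂ i, hz₂ i⟩ : V))
    simpa using this
  calc pairObj ℓ z₁ z₂ y ⇑Astar (u : H)
      = pairObj ℓ (fun i => (⟨z₁ i, hz₁ i⟩ : V)) (fun i => (⟨z₂ i, hz₂ i⟩ : V)) y ⇑Bstar u :=
        hstar
    _ ≤ pairObj ℓ (fun i => (⟨z₁ i, hz₁ i⟩ : V)) (fun i => (⟨z₂ i, hz₂ i⟩ : V)) y ⇑B v :=
        hmin B hBm v
    _ = pairObj ℓ z₁ z₂ y ⇑A w := hval
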